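/- For every even integer k ≥ 4 and every natural number n ≥ 3k, there exists a finite simple connected graph G on exactly n vertices with γ(G) = χ(G) = χ_d(G) = k, i.e., a D(k) graph of order n. -/

import Mathlib

open SimpleGraph
section Defs

variable {V : Type*} (G : SimpleGraph V)

/-- `D` is a dominating set of `G`: every vertex outside `D` has a neighbor in `D`. -/
def IsDomSet (D : Set V) : Prop := ∀ v, v ∉ D → ∃ u ∈ D, G.Adj u v

/-- `D` is a total dominating set of `G`: every vertex has a neighbor in `D`. -/
def IsTotalDomSet (D : Set V) : Prop := ∀ v, ∃ u ∈ D, G.Adj u v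

/-- The domination number `γ(G)`. -/
noncomputable def domNum [Fintype V] : ℕ :=
  sInf {n | ∃ D : Set V, IsDomSet G D ∧ D.ncard = n}

/-- The total domination number `γ_t(G)`. -/
noncomputable def totalDomNum [Fintype V] : ℕ :=
  sInf {n | ∃ D : Set V, IsTotalDomSet G D ∧ D.ncard = n}

/-- `C` is a proper coloring of `G` with exactly `k` color classes:
a partition of the vertex set into `k` nonempty independent sets. -/
def IsProperColoring {k : ℕ} (C : Fin k → Set V) : Prop :=
  (∀ v, ∃! i, v ∈ C i) ∧ (∀ i, (C i).Nonempty) ∧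
    (∀ i, ∀ u ∈ C i, ∀ w ∈ C i, ¬ G.Adj u w)

/-- `v` dominates the color class `S`: every vertex of `S` is in the
closed neighborhood of `v`. -/
def DominatesClass (v : V) (S : Set V) : Prop := ∀ u ∈ S, u = v ∨ G.Adj v u

/-- A dominator coloring: a proper coloring in which every vertex dominates
at least one color class. -/
def IsDominatorColoring {k : ℕ} (C : Fin k → Set V) : Prop :=
  IsProperColoring G C ∧ ∀ v, ∃ i, DominatesClass G v (C i)

/-- A dominated coloring: a proper coloring in which every color class has a
dominating vertex, i.e. a vertex adjacent to every vertex of the class. -/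
def IsDominatedColoring {k : ℕ} (C : Fin k → Set V) : Prop :=
  IsProperColoring G C ∧ ∀ i, ∃ v, ∀ u ∈ C i, G.Adj v u

/-- The dominator chromatic number `χ_d(G)`. -/
noncomputable def domChromNum : ℕ :=
  sInf {k | ∃ C : Fin k → Set V, IsDominatorColoring G C}

/-- The dominated chromatic number `χ_dom(G)`. -/
noncomputable def dominatedChromNum : ℕ :=
  sInf {k | ∃ C : Fin k → Set V, IsDominatedColoring G C}

/-- `G` is a `D(k)` graph: `γ(G) = χ(G) = χ_d(G) = k`. -/
def IsDk [Fintype V] (k : ℕ) : Prop :=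
  domNum G = k ∧ G.chromaticNumber = (k : ℕ∞) ∧ domChromNum G = k

end Defs
namespace Stmt7

def cls (k v : ℕ) : ℕ := if v < 3*k then v % k else 0

lemma cls_lt {k : ℕ} (hk : 0 < k) (v : ℕ) : cls k v < k := by
  unfold cls; split
  · exact Nat.mod_lt _ hk
  · exact hk

lemma cls_small {k j : ℕ} (hj : j < k) : cls k j = j := by
  unfold cls
  rw [if_pos (by omega), Nat.mod_eq_of_lt hj]

lemma cls_add_k {k j : ℕ} (hj : j < k) : cls k (j + k) = j := by
  unfold cls
  rw [if_pos (by omega), Nat.add_mod_right, Nat.mod_eq_of_lt hj]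

lemma cls_add_2k {k j : ℕ} (hj : j < k) : cls k (j + 2*k) = j := by
  unfold cls
  rw [if_pos (by omega), Nat.add_mul_mod_self_right, Nat.mod_eq_of_lt hj]

def opp (j : ℕ) : ℕ := if j % 2 = 0 then j + 1 else j - 1

lemma opp_div (j : ℕ) : opp j / 2 = j / 2 := by unfold opp; split <;> omega
lemma opp_mod (j : ℕ) : opp j % 2 ≠ j % 2 := by unfold opp; split <;> omega
lemma opp_lt {k j : ℕ} (hke : k % 2 = 0) (hj : j < k) : opp j < k := by
  unfold opp; split <;> omega

def gr (k n : ℕ) : SimpleGraph (Fin n) where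
  Adj u v := u ≠ v ∧ ((cls k u.val / 2 = cls k v.val / 2 ∧ cls k u.val % 2 ≠ cls k v.val % 2)
    ∨ (u.val < k ∧ v.val < k))
  symm := by
    constructor
    rintro u v ⟨h1, h2⟩
    exact ⟨h1.symm, by tauto⟩
  loopless := by constructor; rintro v ⟨h, -⟩; exact h rfl

lemma adj_of_cls {k n : ℕ} {u v : Fin n} (h1 : cls k u.val / 2 = cls k v.val / 2)
    (h2 : cls k u.val % 2 ≠ cls k v.val % 2) : (gr k n).Adj u v :=
  ⟨fun e => h2 (by rw [e]), Or.inl ⟨h1, h2⟩⟩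

lemma cls_ne_of_adj {k n : ℕ} {u v : Fin n} (h : (gr k n).Adj u v) :
    cls k u.val ≠ cls k v.val := by
  obtain ⟨hne, h | h⟩ := h
  · exact fun e => h.2 (by rw [e])
  · rw [cls_small h.1, cls_small h.2]
    exact fun e => hne (Fin.ext e)

end Stmt7

open Stmt7

/-- For every even integer `k ≥ 4` and every natural number
`n ≥ 3k`, there exists a connected `D(k)` graph of order `n`. -/
theorem stmt_7 (k n : ℕ) (hk : 4 ≤ k) (hke : Even k) (hn : 3 * k ≤ n) :
    ∃ G : SimpleGraph (Fin n), G.Connected ∧ IsDk G k := by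
  classical
  have hk0 : 0 < k := by omega
  have hke' : k % 2 = 0 := Nat.even_iff.mp hke
  have hkn : k ≤ n := by omega
  set G := Stmt7.gr k n with hG
  -- every vertex is adjacent to a "special" vertex (index < k) of opposite class
  have central : ∀ v : Fin n, ∃ u : Fin n, u.val < k ∧ G.Adj u v := by
    intro v
    have hc := cls_lt hk0 v.val
    have ho : opp (cls k v.val) < k := opp_lt hke' hc
    refine ⟨⟨opp (cls k v.val), by omega⟩, ho, ?_⟩
    apply adj_of_cls
    · show cls k (opp (cls k v.val)) / 2 = _
      rw [cls_small ho, opp_div]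
    · show cls k (opp (cls k v.val)) % 2 ≠ _
      rw [cls_small ho]
      exact opp_mod _
  -- connectivity
  have hreach : ∀ v : Fin n, G.Reachable v ⟨0, by omega⟩ := by
    intro v
    obtain ⟨u, hu, hadj⟩ := central v
    by_cases h0 : u = ⟨0, by omega⟩
    · exact (h0 ▸ hadj).reachable.symm
    · have hadj0 : G.Adj u ⟨0, by omega⟩ := ⟨h0, Or.inr ⟨hu, hk0⟩⟩
      exact hadj.reachable.symm.trans hadj0.reachable
  have hconn : G.Connected := by
    rw [connected_iff]
    exact ⟨fun u v => (hreach u).trans (hreach v).symm, ⟨⟨0, by omega⟩⟩⟩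
  -- the clique of special vertices
  set s : Finset (Fin n) := (Finset.univ : Finset (Fin k)).image (Fin.castLE hkn) with hs
  have hscard : s.card = k := by
    rw [hs, Finset.card_image_of_injective _ (Fin.castLE_injective hkn), Finset.card_univ,
      Fintype.card_fin]
  have hsmem : ∀ v : Fin n, v ∈ s ↔ v.val < k := by
    intro v
    simp only [hs, Finset.mem_image, Finset.mem_univ, true_and]
    constructor
    · rintro ⟨a, rfl⟩; exact a.2
    · intro hv; exact ⟨⟨v.val, hv⟩, Fin.ext rfl⟩
  have hclique : G.IsClique ↑s := by
    intro u hu v hv huv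
    exact ⟨huv, Or.inr ⟨(hsmem u).mp hu, (hsmem v).mp hv⟩⟩
  -- chromatic number
  have hcolor : G.Colorable k := by
    refine ⟨Coloring.mk (fun v => ⟨cls k v.val, cls_lt hk0 _⟩) ?_⟩
    intro u v h e
    exact cls_ne_of_adj h (by simpa using congrArg Fin.val e)
  have hchrom : G.chromaticNumber = (k : ℕ∞) := by
    refine le_antisymm hcolor.chromaticNumber_le ?_
    have := hclique.card_le_chromaticNumber
    rwa [hscard] at this
  -- domination number, upper bound witness
  have hdomset : IsDomSet G ↑s := by
    intro v _
    obtain ⟨u, hu, hadj⟩ := central v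
    exact ⟨u, Finset.mem_coe.mpr ((hsmem u).mpr hu), hadj⟩
  -- domination number, lower bound
  have hlower : ∀ D : Set (Fin n), IsDomSet G D → k ≤ D.ncard := by
    intro D hD
    have hfin : D.Finite := Set.toFinite D
    rw [Set.ncard_eq_toFinset_card D hfin]
    set DF := hfin.toFinset with hDF
    have hmap : ∀ v ∈ DF, cls k v.val / 2 ∈ Finset.range (k/2) := by
      intro v _
      have := cls_lt hk0 v.val
      simp only [Finset.mem_range]
      omega
    rw [Finset.card_eq_sum_card_fiberwise hmap]
    have h2 : ∀ r ∈ Finset.range (k/2),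
        2 ≤ (DF.filter (fun v => cls k v.val / 2 = r)).card := by
      intro r hr
      rw [Finset.mem_range] at hr
      have h2r : 2*r + 1 < k := by omega
      have key : ∀ c t : ℕ, c < k → c / 2 = r → (t = c + k ∨ t = c + 2*k) →
          ∃ d ∈ D, cls k d.val / 2 = r ∧
            (cls k d.val % 2 ≠ c % 2 ∨ (d.val = t ∧ cls k d.val = c)) := by
        intro c t hc hcr ht
        have htn : t < n := by omega
        have hclst : cls k (⟨t, htn⟩ : Fin n).val = c := by
          rcases ht with rfl | rfl
          · exact cls_add_k hc
          · exact cls_add_2k hc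
        by_cases hmem : (⟨t, htn⟩ : Fin n) ∈ D
        · exact ⟨_, hmem, by rw [hclst]; exact hcr, Or.inr ⟨rfl, hclst⟩⟩
        · obtain ⟨u, huD, huadj⟩ := hD _ hmem
          obtain ⟨hne, hcase | hcase⟩ := huadj
          · rw [hclst] at hcase
            exact ⟨u, huD, by rw [hcase.1, hcr], Or.inl hcase.2⟩
          · exfalso
            have := hcase.2
            simp only [Fin.val_mk] at this
            omega
      obtain ⟨d1, hd1D, hd1r, hd1⟩ := key (2*r) (2*r + k) (by omega) (by omega) (Or.inl rfl)
      obtain ⟨d2, hd2D, hd2r, hd2⟩ := key (2*r) (2*r + 2*k) (by omega) (by omega) (Or.inr rfl)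
      obtain ⟨e1, he1D, he1r, he1⟩ := key (2*r+1) (2*r+1 + k) (by omega) (by omega) (Or.inl rfl)
      obtain ⟨e2, he2D, he2r, he2⟩ := key (2*r+1) (2*r+1 + 2*k) (by omega) (by omega) (Or.inr rfl)
      have hmemf : ∀ x : Fin n, x ∈ D → cls k x.val / 2 = r →
          x ∈ DF.filter (fun v => cls k v.val / 2 = r) := by
        intro x hx hxr
        rw [Finset.mem_filter, hDF, Set.Finite.mem_toFinset]
        exact ⟨hx, hxr⟩
      have hsuff : ∀ a b : Fin n, a ∈ D → b ∈ D → cls k a.val / 2 = r →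
          cls k b.val / 2 = r → a ≠ b →
          2 ≤ (DF.filter (fun v => cls k v.val / 2 = r)).card := by
        intro a b ha hb har hbr hab
        exact Finset.one_lt_card.mpr ⟨a, hmemf a ha har, b, hmemf b hb hbr, hab⟩
      rcases hd1 with h1 | h1
      · rcases he1 with h3 | h3
        · -- parity of d1 is 1, parity of e1 is 0
          refine hsuff d1 e1 hd1D he1D hd1r he1r (fun e => ?_)
          rw [e] at h1; omega
        · rcases he2 with h4 | h4
          · refine hsuff d1 e2 hd1D he2D hd1r he2r (fun e => ?_)
            rw [e] at h1; omega
          · refine hsuff e1 e2 he1D he2D he1r he2r (fun e => ?_)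
            rw [e] at h3; omega
      · rcases he1 with h3 | h3
        · rcases hd2 with h4 | h4
          · refine hsuff d2 e1 hd2D he1D hd2r he1r (fun e => ?_)
            rw [e] at h4; omega
          · refine hsuff d1 d2 hd1D hd2D hd1r hd2r (fun e => ?_)
            rw [e] at h1; omega
        · -- d1 has class 2r, e1 has class 2r+1
          refine hsuff d1 e1 hd1D he1D hd1r he1r (fun e => ?_)
          rw [e] at h1; omega
    calc k = ∑ _r ∈ Finset.range (k/2), 2 := by
            rw [Finset.sum_const, Finset.card_range, smul_eq_mul]; omega
      _ ≤ _ := Finset.sum_le_sum h2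
  have hdommem : k ∈ {x | ∃ D : Set (Fin n), IsDomSet G D ∧ D.ncard = x} :=
    ⟨↑s, hdomset, by rw [Set.ncard_coe_finset, hscard]⟩
  have hdomnum : domNum G = k := by
    refine le_antisymm (Nat.sInf_le hdommem) (le_csInf ⟨k, hdommem⟩ ?_)
    rintro x ⟨D, hDdom, rfl⟩
    exact hlower D hDdom
  -- dominator chromatic number
  have hdcmem : k ∈ {k' | ∃ C : Fin k' → Set (Fin n), IsDominatorColoring G C} := by
    refine ⟨fun j => {v | cls k v.val = j.val}, ⟨⟨?_, ?_, ?_⟩, ?_⟩⟩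
    · intro v
      refine ⟨⟨cls k v.val, cls_lt hk0 _⟩, rfl, ?_⟩
      intro i hi
      exact Fin.ext hi.symm
    · intro i
      exact ⟨⟨i.val, by omega⟩, by simpa using cls_small i.2⟩
    · intro i u hu w hw hadj
      exact cls_ne_of_adj hadj (hu.trans hw.symm)
    · intro v
      have hc := cls_lt hk0 v.val
      refine ⟨⟨opp (cls k v.val), opp_lt hke' hc⟩, ?_⟩
      intro u hu
      right
      apply adj_of_cls
      · rw [show cls k u.val = opp (cls k v.val) from hu]
        exact (opp_div _).symm
      · rw [show cls k u.val = opp (cls k v.val) from hu]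
        exact (opp_mod _).symm
  have hdclower : ∀ x ∈ {k' | ∃ C : Fin k' → Set (Fin n), IsDominatorColoring G C}, k ≤ x := by
    rintro k' ⟨C, ⟨hU, -, hI⟩, -⟩
    have hex : ∀ j : Fin k, ∃ i, (⟨j.val, by omega⟩ : Fin n) ∈ C i := fun j => (hU _).exists
    choose ι hι using hex
    have hinj : Function.Injective ι := by
      intro a b hab
      by_contra hne
      have hadj : G.Adj ⟨a.val, by omega⟩ ⟨b.val, by omega⟩ := by
        refine ⟨fun e => hne (Fin.ext (by simpa using congrArg Fin.val e)), Or.inr ⟨a.2, b.2⟩⟩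
      exact hI (ι a) _ (hι a) _ (hab ▸ hι b) hadj
    simpa using Fintype.card_le_of_injective ι hinj
  have hdchrom : domChromNum G = k :=
    le_antisymm (Nat.sInf_le hdcmem) (le_csInf ⟨k, hdcmem⟩ hdclower)
  exact ⟨G, hconn, hdomnum, hchrom, hdchrom⟩
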